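/- arXiv:1908.06453 — 7 statements merged into one kernel-verified Lean document; each statement's English description precedes it below -/
import Mathlib

section
/- Let n1, n2 be positive natural numbers and let B1 be an n1 × n1 integer matrix and B2 an n2 × n2 integer matrix such that the entries in each row of B1 sum to zero and the entries in each row of B2 sum to zero. Let B be the (n1+n2) × (n1+n2) block-diagonal integer matrix with diagonal blocks B1 and B2 (and zero off-diagonal blocks). Then for every choice of a row index i and a column index j, the (n1+n2−1) × (n1+n2−1) matrix obtained from B by deleting row i and column j has determinant zero. -/
open Finset Matrix

/-- If `B1`, `B2` are square integer matrices (of positive sizes `n1`, `n2`)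
whose rows each sum to zero, and `B` is the block-diagonal matrix with blocks `B1`, `B2`,
then every `(n1+n2-1) × (n1+n2-1)` minor of `B` obtained by deleting one row and one
column vanishes. -/
theorem split_block_diagonal_minor_det_zero
    (n1 n2 : ℕ) (h1 : 0 < n1) (h2 : 0 < n2)
    (B1 : Matrix (Fin n1) (Fin n1) ℤ) (B2 : Matrix (Fin n2) (Fin n2) ℤ)
    (hrow1 : ∀ i, ∑ j, B1 i j = 0) (hrow2 : ∀ i, ∑ j, B2 i j = 0)
    (B : Matrix (Fin (n1 + n2)) (Fin (n1 + n2)) ℤ)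
    (hB : B = Matrix.reindex finSumFinEquiv finSumFinEquiv
      (Matrix.fromBlocks B1 0 0 B2))
    (i j : Fin (n1 + n2)) :
    Matrix.det (fun a b : Fin (n1 + n2 - 1) =>
      B (Fin.cast (by omega)
          ((Fin.cast (by omega : n1 + n2 = (n1 + n2 - 1) + 1) i).succAbove a))
        (Fin.cast (by omega)
          ((Fin.cast (by omega : n1 + n2 = (n1 + n2 - 1) + 1) j).succAbove b))) = 0 := by
  have hm : n1 + n2 = (n1 + n2 - 1) + 1 := by omega
  have hsum : ∀ (P : ℕ → Prop) [DecidablePred P],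
      (∀ a : Fin n1, P (a : ℕ)) ∨ (∀ a : Fin n1, ¬ P (a : ℕ)) →
      (∀ a : Fin n2, P (n1 + a)) ∨ (∀ a : Fin n2, ¬ P (n1 + a)) →
      ∀ r : Fin (n1 + n2),
      ∑ k : Fin (n1 + n2), B r k * (if P (k : ℕ) then (1:ℤ) else 0) = 0 := by
    intro P _ hP1 hP2 r
    subst hB
    rw [← Equiv.sum_comp finSumFinEquiv
      (fun k => (Matrix.reindex finSumFinEquiv finSumFinEquiv
        (Matrix.fromBlocks B1 0 0 B2)) r k * (if P (k : ℕ) then (1:ℤ) else 0))]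
    rw [Fintype.sum_sum_type]
    simp only [Matrix.reindex_apply, Matrix.submatrix_apply, Equiv.symm_apply_apply,
      finSumFinEquiv_apply_left, finSumFinEquiv_apply_right,
      Fin.coe_castAdd, Fin.coe_natAdd]
    have b1 : ∑ a : Fin n1,
        Matrix.fromBlocks B1 0 0 B2 (finSumFinEquiv.symm r) (Sum.inl a) = 0 := by
      rcases h : finSumFinEquiv.symm r with r1 | r2 <;>
        simp [Matrix.fromBlocks, hrow1]
    have b2 : ∑ a : Fin n2,
        Matrix.fromBlocks B1 0 0 B2 (finSumFinEquiv.symm r) (Sum.inr a) = 0 := by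
      rcases h : finSumFinEquiv.symm r with r1 | r2 <;>
        simp [Matrix.fromBlocks, hrow2]
    rcases hP1 with hP1 | hP1 <;> rcases hP2 with hP2 | hP2 <;>
      simp [hP1, hP2, ← Finset.sum_mul, b1, b2]
  -- key: a column-sum identity for the minor, for a block-constant predicate P with ¬P j
  have key : ∀ (P : ℕ → Prop) [DecidablePred P],
      (∀ a : Fin n1, P (a : ℕ)) ∨ (∀ a : Fin n1, ¬ P (a : ℕ)) →
      (∀ a : Fin n2, P (n1 + a)) ∨ (∀ a : Fin n2, ¬ P (n1 + a)) →
      ¬ P (j : ℕ) →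
      ∀ r : Fin (n1 + n2),
      ∑ b : Fin (n1 + n2 - 1),
        B r (Fin.cast hm.symm ((Fin.cast hm j).succAbove b)) *
          (if P (((Fin.cast hm j).succAbove b : Fin _) : ℕ) then (1:ℤ) else 0) = 0 := by
    intro P _ hP1 hP2 hPj r
    set g : Fin ((n1 + n2 - 1) + 1) → ℤ :=
      fun k => B r (Fin.cast hm.symm k) * (if P (k : ℕ) then (1:ℤ) else 0) with hg
    have h0 : ∑ k, g k = g (Fin.cast hm j) + ∑ b, g ((Fin.cast hm j).succAbove b) :=
      Fin.sum_univ_succAbove g (Fin.cast hm j)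
    have hgp : g (Fin.cast hm j) = 0 := by
      simp [hg, hPj]
    have htot : ∑ k, g k = 0 := by
      rw [← Equiv.sum_comp (finCongr hm) g]
      have : ∀ k' : Fin (n1 + n2), g (finCongr hm k') =
          B r k' * (if P (k' : ℕ) then (1:ℤ) else 0) := by
        intro k'; simp [hg]
      rw [Finset.sum_congr rfl fun k' _ => this k']
      exact hsum P hP1 hP2 r
    have := htot
    rw [h0, hgp, zero_add] at this
    simpa [hg] using this
  refine Matrix.exists_mulVec_eq_zero_iff.mp ?_
  by_cases hj : (j : ℕ) < n1
  · -- delete a column from block 1; use block-2 indicator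
    refine ⟨fun b => if n1 ≤ (((Fin.cast hm j).succAbove b : Fin _) : ℕ) then 1 else 0,
      ?_, ?_⟩
    · have hne : (⟨n1, by omega⟩ : Fin ((n1 + n2 - 1) + 1)) ≠ Fin.cast hm j := by
        intro h; apply_fun Fin.val at h; simp at h; omega
      obtain ⟨b, hb⟩ := Fin.exists_succAbove_eq hne
      intro h0
      have := congrFun h0 b
      simp [hb] at this
    · funext r
      simp only [Matrix.mulVec, dotProduct, Pi.zero_apply]
      exact key (fun x => n1 ≤ x) (Or.inr fun a => by omega)
        (Or.inl fun a => by omega) (by omega) _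
  · -- delete a column from block 2; use block-1 indicator
    refine ⟨fun b => if (((Fin.cast hm j).succAbove b : Fin _) : ℕ) < n1 then 1 else 0,
      ?_, ?_⟩
    · have hne : (⟨0, by omega⟩ : Fin ((n1 + n2 - 1) + 1)) ≠ Fin.cast hm j := by
        intro h; apply_fun Fin.val at h; simp at h; omega
      obtain ⟨b, hb⟩ := Fin.exists_succAbove_eq hne
      intro h0
      have := congrFun h0 b
      simp [hb, h1] at this
    · funext r
      simp only [Matrix.mulVec, dotProduct, Pi.zero_apply]
      exact key (fun x => x < n1) (Or.inl fun a => by omega)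
        (Or.inr fun a => by omega) (by omega) _
end

section
/- Fix n ∈ ℕ and functions k, r : (Fin n → Bool) → ℕ. Assume that k(S') ≤ k(S) + 1 whenever the state S' is obtained from a state S by changing exactly one coordinate from false to true. Then d_max(⟨n,k,r⟩) ≤ n + 2·k(S_A). If moreover k(S) ≤ k(S_A) for every state S having exactly one coordinate equal to true (A-adequacy of the diagram), then d_max(⟨n,k,r⟩) = n + 2·k(S_A). -/
open Finset

noncomputable section

/-- The ring `(ℤ[z])[A, A⁻¹]`: Laurent polynomials in `A` over `ℤ[z]`. -/
abbrev LP := LaurentPolynomial (Polynomial ℤ)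

/-- The homological variable `z`. -/
def zz : LP := LaurentPolynomial.C Polynomial.X

/-- `a(S)`: the number of `A`-smoothings (coordinates where `S` is `false`). -/
def aCount {n : ℕ} (S : Fin n → Bool) : ℕ := (Finset.univ.filter fun i => S i = false).card

/-- `b(S)`: the number of `B`-smoothings (coordinates where `S` is `true`). -/
def bCount {n : ℕ} (S : Fin n → Bool) : ℕ := (Finset.univ.filter fun i => S i = true).card

/-- Two states are adjacent if they differ in exactly one coordinate. -/
def Adjacent {n : ℕ} (S S' : Fin n → Bool) : Prop :=
  ∃ i : Fin n, S' = Function.update S i (!(S i))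

open LaurentPolynomial Polynomial

/-- view an element of `LP` as a finsupp -/
def cf (p : LP) : ℤ →₀ Polynomial ℤ := p.coeff

lemma cf_add (p q : LP) : cf (p + q) = cf p + cf q := rfl

lemma mem_support_iff (p : LP) (d : ℤ) : d ∈ p.coeff.support ↔ cf p d ≠ 0 := Finsupp.mem_support_iff

lemma cf_sum {ι : Type*} (s : Finset ι) (p : ι → LP) (d : ℤ) :
    cf (∑ i ∈ s, p i) d = ∑ i ∈ s, cf (p i) d :=
  by rw [cf, AddMonoidAlgebra.coeff_sum, Finsupp.finset_sum_apply]; rfl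

def gg : LP := T (-2) + T 2

lemma mulT_apply (p : LP) (m d : ℤ) : cf (p * T m) d = cf p (d - m) := by
  have := AddMonoidAlgebra.coeff_mul_single_apply p (1 : Polynomial ℤ) m d
  rw [mul_one] at this
  exact this

lemma mulC_apply (p : LP) (c : Polynomial ℤ) (d : ℤ) :
    cf (p * LaurentPolynomial.C c) d = cf p d * c := by
  have := AddMonoidAlgebra.coeff_mul_single_apply p c 0 d
  rw [neg_zero, add_zero] at this
  exact this

lemma Cmul_apply (c : Polynomial ℤ) (p : LP) (d : ℤ) :
    cf (LaurentPolynomial.C c * p) d = c * cf p d := by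
  have := AddMonoidAlgebra.coeff_single_mul_apply p c (0 : ℤ) d
  rw [neg_zero, zero_add] at this
  exact this

lemma cf_one (d : ℤ) : cf 1 d = if d = 0 then 1 else 0 := by
  have : (cf 1 : ℤ →₀ Polynomial ℤ) = Finsupp.single 0 1 := rfl
  rw [this, Finsupp.single_apply]
  simp [eq_comm]

lemma gg_pow_apply_eq_zero : ∀ (k : ℕ) (d : ℤ), 2 * (k : ℤ) < d → cf (gg ^ k) d = 0 := by
  intro k
  induction k with
  | zero => intro d hd; rw [pow_zero, cf_one, if_neg (by omega)]
  | succ k ih =>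
    intro d hd
    have h : cf (gg ^ (k+1)) d = cf (gg ^ k) (d + 2) + cf (gg ^ k) (d - 2) := by
      rw [pow_succ, gg, mul_add, cf_add, Finsupp.add_apply, mulT_apply, mulT_apply]
      ring_nf
    rw [h, ih (d+2) (by omega), ih (d-2) (by omega), add_zero]

lemma gg_pow_apply_top : ∀ (k : ℕ), cf (gg ^ k) (2 * (k : ℤ)) = 1 := by
  intro k
  induction k with
  | zero => rw [Nat.cast_zero, mul_zero, pow_zero, cf_one, if_pos rfl]
  | succ k ih =>
    have h : cf (gg ^ (k+1)) (2*((k:ℤ)+1)) = cf (gg ^ k) (2*(k:ℤ)+4) + cf (gg ^ k) (2*(k:ℤ)) := by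
      rw [pow_succ, gg, mul_add, cf_add, Finsupp.add_apply, mulT_apply, mulT_apply]
      ring_nf
    push_cast
    rw [h, ih, gg_pow_apply_eq_zero k _ (by omega), zero_add]

lemma term_apply (m : ℤ) (k r : ℕ) (d : ℤ) :
    cf (T m * (-(T (-2)) - T 2 : LP) ^ k * zz ^ r) d
      = (-1)^k * cf (gg ^ k) (d - m) * X ^ r := by
  have hzz : (zz ^ r : LP) = LaurentPolynomial.C (X ^ r) := by
    rw [zz, ← map_pow]
  have hneg : ((-1 : LP) ^ k) = LaurentPolynomial.C ((-1 : Polynomial ℤ)^k) := by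
    rw [map_pow, map_neg, map_one]
  have e1 : T m * (-(T (-2)) - T 2 : LP) ^ k * zz ^ r
      = LaurentPolynomial.C ((-1 : Polynomial ℤ)^k) *
        ((gg ^ k * T m : LP) * LaurentPolynomial.C (X ^ r)) := by
    rw [hzz, ← hneg, show (-(T (-2)) - T 2 : LP) = -gg by rw [gg]; ring, neg_pow gg k]
    ring
  rw [e1, Cmul_apply, mulC_apply, mulT_apply]
  ring

section Comb
variable {n : ℕ}

lemma count_sum (S : Fin n → Bool) : aCount S + bCount S = n := by
  classical
  have h := Finset.card_filter_add_card_filter_not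
    (s := (univ : Finset (Fin n))) (p := fun i => S i = false)
  have e : (univ.filter fun i => ¬ S i = false) = univ.filter fun i => S i = true := by
    apply Finset.filter_congr; intro i _; simp
  rw [e] at h
  rw [aCount, bCount, h, Finset.card_univ, Fintype.card_fin]

lemma bCount_zero (S : Fin n → Bool) (h : bCount S = 0) : S = fun _ => false := by
  funext i
  by_contra hi
  have hS : S i = true := by cases hS : S i <;> simp_all
  have hm : i ∈ univ.filter fun j => S j = true := by simp [hS]
  rw [bCount, Finset.card_eq_zero] at h
  rw [h] at hm
  exact absurd hm (Finset.notMem_empty i)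

lemma extract (S : Fin n → Bool) {m : ℕ} (h : bCount S = m + 1) :
    ∃ S0 : Fin n → Bool, ∃ i : Fin n, S0 i = false ∧ Function.update S0 i true = S ∧
      bCount S0 = m := by
  have hne : (univ.filter fun j => S j = true).Nonempty := by
    rw [← Finset.card_pos, ← bCount]; omega
  obtain ⟨i, hi⟩ := hne
  have hSi : S i = true := by simpa using hi
  refine ⟨Function.update S i false, i, by simp, ?_, ?_⟩
  · funext j
    by_cases hj : j = i
    · subst hj; simp [hSi]
    · simp [Function.update_of_ne hj]
  · have e : (univ.filter fun j => Function.update S i false j = true)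
        = (univ.filter fun j => S j = true).erase i := by
      ext j
      by_cases hj : j = i
      · subst hj; simp
      · simp [Function.update_of_ne hj, hj]
    rw [bCount, e, Finset.card_erase_of_mem hi, ← bCount, h]
    rfl

lemma k_le (k : (Fin n → Bool) → ℕ)
    (hk : ∀ (S : Fin n → Bool) (i : Fin n), S i = false →
      k (Function.update S i true) ≤ k S + 1) :
    ∀ (m : ℕ) (S : Fin n → Bool), bCount S = m → k S ≤ k (fun _ => false) + m := by
  intro m
  induction m with
  | zero => intro S h; rw [bCount_zero S h]; omega
  | succ m ih =>
    intro S h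
    obtain ⟨S0, i, h0, h1, h2⟩ := extract S h
    have hup := hk S0 i h0
    rw [h1] at hup
    have := ih S0 h2
    omega

lemma k_lt (k : (Fin n → Bool) → ℕ)
    (hk : ∀ (S : Fin n → Bool) (i : Fin n), S i = false →
      k (Function.update S i true) ≤ k S + 1)
    (hadq : ∀ S : Fin n → Bool, bCount S = 1 → k S ≤ k (fun _ => false)) :
    ∀ (m : ℕ) (S : Fin n → Bool), bCount S = m + 1 →
      k S + 1 ≤ k (fun _ => false) + m + 1 := by
  intro m
  induction m with
  | zero => intro S h; have := hadq S h; omega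
  | succ m ih =>
    intro S h
    obtain ⟨S0, i, h0, h1, h2⟩ := extract S h
    have hup := hk S0 i h0
    rw [h1] at hup
    have := ih S0 h2
    omega

end Comb

/-- The bracket state sum
`⟨n,k,r⟩ = Σ_S A^(a(S)-b(S)) · (-A⁻² - A²)^(k S) · z^(r S)` in `(ℤ[z])[A,A⁻¹]`,
where `A^m = LaurentPolynomial.T m`. -/
def bracket (n : ℕ) (k r : (Fin n → Bool) → ℕ) : LP :=
  ∑ S : Fin n → Bool,
    LaurentPolynomial.T ((aCount S : ℤ) - (bCount S : ℤ)) *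
      (-(LaurentPolynomial.T (-2)) - LaurentPolynomial.T 2) ^ (k S) * zz ^ (r S)

/-- Lemma 3.6(i): if `k` increases by at most one when a single smoothing
is switched from `A` to `B`, then every exponent of `A` occurring in `⟨n,k,r⟩` is at most
`n + 2·k(S_A)`; and if the diagram is `A`-adequate, the exponent `n + 2·k(S_A)` occurs. -/
theorem dmax_bracket (n : ℕ) (k r : (Fin n → Bool) → ℕ)
    (hk : ∀ (S : Fin n → Bool) (i : Fin n), S i = false →
      k (Function.update S i true) ≤ k S + 1) :
    (∀ d ∈ (bracket n k r).coeff.support, d ≤ (n : ℤ) + 2 * k (fun _ => false)) ∧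
    ((∀ S : Fin n → Bool, bCount S = 1 → k S ≤ k (fun _ => false)) →
      ((n : ℤ) + 2 * (k (fun _ => false) : ℤ)) ∈ (bracket n k r).coeff.support) := by
  constructor
  · intro d hd
    rw [mem_support_iff, bracket, cf_sum] at hd
    obtain ⟨S, -, hS⟩ := Finset.exists_ne_zero_of_sum_ne_zero hd
    rw [term_apply] at hS
    have hgg : cf (gg ^ k S) (d - ((aCount S : ℤ) - (bCount S : ℤ))) ≠ 0 := by
      intro h0; rw [h0] at hS; simp at hS
    have hle : d - ((aCount S : ℤ) - (bCount S : ℤ)) ≤ 2 * (k S : ℤ) := by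
      by_contra hc; push_neg at hc
      exact hgg (gg_pow_apply_eq_zero _ _ hc)
    have hab := count_sum S
    have hkS := k_le k hk (bCount S) S rfl
    omega
  · intro hadq
    rw [mem_support_iff, bracket, cf_sum]
    set d0 : ℤ := (n : ℤ) + 2 * (k (fun _ => false) : ℤ) with hd0
    have hsum : (∑ S : Fin n → Bool,
        cf (LaurentPolynomial.T ((aCount S : ℤ) - (bCount S : ℤ)) *
          (-(LaurentPolynomial.T (-2)) - LaurentPolynomial.T 2) ^ (k S) * zz ^ (r S)) d0)
        = cf (LaurentPolynomial.T ((aCount (fun _ : Fin n => false) : ℤ) -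
            (bCount (fun _ : Fin n => false) : ℤ)) *
          (-(LaurentPolynomial.T (-2)) - LaurentPolynomial.T 2) ^ (k (fun _ => false)) *
            zz ^ (r (fun _ => false))) d0 := by
      apply Finset.sum_eq_single_of_mem _ (Finset.mem_univ _)
      intro S _ hne
      rw [term_apply]
      have hb : 1 ≤ bCount S := by
        rcases Nat.eq_zero_or_pos (bCount S) with h0 | h1
        · exact absurd (bCount_zero S h0) hne
        · exact h1
      obtain ⟨m, hm⟩ : ∃ m, bCount S = m + 1 := ⟨bCount S - 1, by omega⟩
      have hkS := k_lt k hk hadq m S hm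
      have hab := count_sum S
      rw [gg_pow_apply_eq_zero (k S) _ (by omega)]
      simp
    rw [hsum, term_apply]
    have ha : aCount (fun _ : Fin n => false) = n := by
      rw [aCount]; simp
    have hb : bCount (fun _ : Fin n => false) = 0 := by
      rw [bCount]; simp
    rw [ha, hb]
    have he : d0 - ((n : ℤ) - (0 : ℕ)) = 2 * (k (fun _ : Fin n => false) : ℤ) := by
      rw [hd0]; push_cast; ring
    rw [he, gg_pow_apply_top, mul_one]
    exact mul_ne_zero (pow_ne_zero _ (by norm_num)) (pow_ne_zero _ X_ne_zero)
end
end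

section
/- Fix n ∈ ℕ and functions k, r : (Fin n → Bool) → ℕ. Assume that k(S') ≤ k(S) + 1 whenever the state S' is obtained from a state S by changing exactly one coordinate from true to false. Then d_min(⟨n,k,r⟩) ≥ −n − 2·k(S_B). If moreover k(S) ≤ k(S_B) for every state S having exactly one coordinate equal to false (B-adequacy of the diagram), then d_min(⟨n,k,r⟩) = −n − 2·k(S_B). -/
open Finset

noncomputable section

namespace DminAux

open LaurentPolynomial Polynomial

variable {n : ℕ}

lemma aCount_add_bCount (S : Fin n → Bool) : aCount S + bCount S = n := by
  classical
  rw [aCount, bCount]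
  have h := Finset.card_filter_add_card_filter_not
    (s := (univ : Finset (Fin n))) (p := fun i => S i = false)
  simpa [Finset.card_univ] using h

lemma eq_trueFun_of_aCount_eq_zero {S : Fin n → Bool} (h : aCount S = 0) :
    S = fun _ => true := by
  classical
  funext j
  by_contra hj
  have hjf : S j = false := by cases hS : S j <;> simp_all
  have : j ∈ (Finset.univ.filter fun i => S i = false) := by simp [hjf]
  have := Finset.card_pos.mpr ⟨j, this⟩
  rw [aCount] at h; omega

lemma aCount_true : aCount (fun _ : Fin n => true) = 0 := by
  simp [aCount]

lemma aCount_update {S : Fin n → Bool} {i : Fin n} (h : S i = false) :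
    aCount S = aCount (Function.update S i true) + 1 := by
  classical
  have hset : (Finset.univ.filter fun j => S j = false)
      = insert i (Finset.univ.filter fun j => Function.update S i true j = false) := by
    ext j
    simp only [Finset.mem_insert, Finset.mem_filter, Finset.mem_univ, true_and,
      Function.update_apply]
    by_cases hj : j = i
    · subst hj; simp [h]
    · simp [hj]
  have hni : i ∉ (Finset.univ.filter fun j => Function.update S i true j = false) := by
    simp [Function.update_apply]
  rw [aCount, aCount, hset, Finset.card_insert_of_notMem hni]

lemma update_update {S : Fin n → Bool} {i : Fin n} (h : S i = false) :
    Function.update (Function.update S i true) i false = S := by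
  funext j
  by_cases hj : j = i
  · subst hj; simp [h]
  · simp [Function.update_apply, hj]

section chain

variable (k : (Fin n → Bool) → ℕ)
variable (hk : ∀ (S : Fin n → Bool) (i : Fin n), S i = true →
      k (Function.update S i false) ≤ k S + 1)

include hk

lemma step {S : Fin n → Bool} {i : Fin n} (h : S i = false) :
    k S ≤ k (Function.update S i true) + 1 := by
  have := hk (Function.update S i true) i (by simp)
  rwa [update_update h] at this

lemma exists_false_of_aCount_pos {S : Fin n → Bool} (h : 0 < aCount S) :
    ∃ i, S i = false := by
  classical
  obtain ⟨i, hi⟩ := Finset.card_pos.mp h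
  exact ⟨i, (Finset.mem_filter.mp hi).2⟩

lemma chain : ∀ (m : ℕ) (S : Fin n → Bool), aCount S = m →
    k S ≤ k (fun _ => true) + m := by
  intro m
  induction m with
  | zero =>
    intro S hS
    rw [eq_trueFun_of_aCount_eq_zero hS]; omega
  | succ m ih =>
    intro S hS
    obtain ⟨i, hi⟩ := exists_false_of_aCount_pos k hk (S := S) (by omega)
    have h1 := aCount_update (S := S) hi
    have h3 := step k hk hi
    have h4 := ih (Function.update S i true) (by omega)
    omega

lemma chain_adequate (hadq : ∀ S : Fin n → Bool, aCount S = 1 → k S ≤ k (fun _ => true)) :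
    ∀ (m : ℕ) (S : Fin n → Bool), aCount S = m + 1 →
      k S ≤ k (fun _ => true) + m := by
  intro m
  induction m with
  | zero => intro S hS; simpa using hadq S hS
  | succ m ih =>
    intro S hS
    obtain ⟨i, hi⟩ := exists_false_of_aCount_pos k hk (S := S) (by omega)
    have h1 := aCount_update (S := S) hi
    have h3 := step k hk hi
    have h4 := ih (Function.update S i true) (by omega)
    omega

end chain

/-- Rewrite one state-sum term as a `T`-shift of the image of an honest polynomial. -/
lemma term_rw (c : ℤ) (kk rr : ℕ) :
    T c * (-(T (-2)) - T 2) ^ kk * zz ^ rr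
      = T (c - 2 * kk) *
        Polynomial.toLaurent
          (((-1 : (Polynomial ℤ)[X]) - X ^ 4) ^ kk * Polynomial.C (Polynomial.X ^ rr)) := by
  have h4 : (T (-2) : LP) * T 4 = T 2 := by rw [← T_add]; norm_num
  have h1 : (-(T (-2)) - T 2 : LP) = T (-2) * (-1 - T 4) := by
    rw [mul_sub, h4]; ring
  have h2 : Polynomial.toLaurent ((-1 : (Polynomial ℤ)[X]) - X ^ 4) = (-1 : LP) - T 4 := by
    rw [map_sub, map_neg, map_one, Polynomial.toLaurent_X_pow]; norm_num
  have h3 : (zz : LP) ^ rr = LaurentPolynomial.C (Polynomial.X ^ rr) := by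
    rw [zz, ← map_pow]
  rw [h1, mul_pow, T_pow, map_mul, map_pow, h2, Polynomial.toLaurent_C, h3]
  rw [show ((kk : ℤ) * (-2)) = -(2 * kk) by ring]
  rw [show (c - 2 * kk : ℤ) = c + -(2 * kk) by ring, T_add]
  ring

/-- The full bracket as a `T`-shift of an honest polynomial. -/
lemma bracket_rw (k r : (Fin n → Bool) → ℕ)
    (hchain : ∀ S : Fin n → Bool, k S ≤ k (fun _ => true) + aCount S) :
    bracket n k r
      = T (-(n : ℤ) - 2 * k (fun _ => true)) *
        Polynomial.toLaurent (∑ S : Fin n → Bool,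
          (X : (Polynomial ℤ)[X]) ^ (2 * (aCount S + k (fun _ => true) - k S)) *
            (((-1 : (Polynomial ℤ)[X]) - X ^ 4) ^ (k S) * Polynomial.C (Polynomial.X ^ (r S)))) := by
  rw [bracket, map_sum, Finset.mul_sum]
  refine Finset.sum_congr rfl fun S _ => ?_
  rw [term_rw]
  conv_rhs => rw [map_mul, Polynomial.toLaurent_X_pow]
  rw [← mul_assoc, ← T_add]
  congr 2
  have hab := aCount_add_bCount S
  have hle := hchain S
  have hcast : ((2 * (aCount S + k (fun _ => true) - k S) : ℕ) : ℤ)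
      = 2 * ((aCount S : ℤ) + k (fun _ => true) - k S) := by
    have : ((aCount S + k (fun _ => true) - k S : ℕ) : ℤ)
        = (aCount S : ℤ) + k (fun _ => true) - k S := by
      push_cast [Nat.cast_sub (by omega : k S ≤ aCount S + k (fun _ => true))]
      ring
    push_cast [this]; ring
  rw [hcast]
  have : (bCount S : ℤ) = (n : ℤ) - aCount S := by omega
  rw [this]; ring

lemma T_mul_apply (t : ℤ) (f : LP) (d : ℤ) : ((T t : LP) * f).coeff d = f.coeff (d - t) := by
  have h := AddMonoidAlgebra.coeff_single_mul_apply f (1 : Polynomial ℤ) t d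
  have hT : (T t : LP) = AddMonoidAlgebra.single t (1 : Polynomial ℤ) := rfl
  rw [hT, h, one_mul, neg_add_eq_sub]

lemma toLaurent_apply_nat (p : (Polynomial ℤ)[X]) (m : ℕ) :
    (Polynomial.toLaurent p).coeff (m : ℤ) = p.coeff m := by
  rw [LaurentPolynomial.coeff_toLaurent]
  exact Finsupp.mapDomain_apply (Nat.castEmbedding (R := ℤ)).injective _ m

end DminAux

/-- Lemma 3.6(ii): if `k` increases by at most one when a single smoothing
is switched from `B` to `A`, then every exponent of `A` occurring in `⟨n,k,r⟩` is at least
`-n - 2·k(S_B)`; and if the diagram is `B`-adequate, the exponent `-n - 2·k(S_B)` occurs. -/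
theorem dmin_bracket (n : ℕ) (k r : (Fin n → Bool) → ℕ)
    (hk : ∀ (S : Fin n → Bool) (i : Fin n), S i = true →
      k (Function.update S i false) ≤ k S + 1) :
    (∀ d ∈ (bracket n k r).coeff.support, -(n : ℤ) - 2 * k (fun _ => true) ≤ d) ∧
    ((∀ S : Fin n → Bool, aCount S = 1 → k S ≤ k (fun _ => true)) →
      (-(n : ℤ) - 2 * (k (fun _ => true) : ℤ)) ∈ (bracket n k r).coeff.support) := by
  classical
  open DminAux LaurentPolynomial Polynomial in
  have hchain : ∀ S : Fin n → Bool, k S ≤ k (fun _ => true) + aCount S :=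
    fun S => DminAux.chain k hk (aCount S) S rfl
  set K := k (fun _ : Fin n => true) with hK
  set P : (Polynomial ℤ)[X] := ∑ S : Fin n → Bool,
      (Polynomial.X : (Polynomial ℤ)[X]) ^ (2 * (aCount S + K - k S)) *
        (((-1 : (Polynomial ℤ)[X]) - Polynomial.X ^ 4) ^ (k S) *
          Polynomial.C (Polynomial.X ^ (r S))) with hP
  have hbr : bracket n k r = LaurentPolynomial.T (-(n : ℤ) - 2 * K) * Polynomial.toLaurent P :=
    DminAux.bracket_rw k r hchain
  constructor
  · intro d hd
    rw [Finsupp.mem_support_iff, hbr, DminAux.T_mul_apply] at hd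
    have : d - (-(n : ℤ) - 2 * K) ∈ (Polynomial.toLaurent P).coeff.support :=
      Finsupp.mem_support_iff.mpr hd
    rw [LaurentPolynomial.toLaurent_support] at this
    obtain ⟨m, _, hm⟩ := Finset.mem_map.mp this
    have : d - (-(n : ℤ) - 2 * K) = (m : ℤ) := hm.symm
    omega
  · intro hadq
    rw [Finsupp.mem_support_iff, hbr, DminAux.T_mul_apply, sub_self]
    have h0 : ((0 : ℕ) : ℤ) = 0 := rfl
    rw [← h0, DminAux.toLaurent_apply_nat, Polynomial.coeff_zero_eq_eval_zero]
    rw [hP, Polynomial.eval_finset_sum]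
    have hsum : ∀ S : Fin n → Bool, S ∈ (Finset.univ : Finset (Fin n → Bool)) →
        S ≠ (fun _ => true) →
        Polynomial.eval 0 ((Polynomial.X : (Polynomial ℤ)[X]) ^ (2 * (aCount S + K - k S)) *
          (((-1 : (Polynomial ℤ)[X]) - Polynomial.X ^ 4) ^ (k S) *
            Polynomial.C (Polynomial.X ^ (r S)))) = 0 := by
      intro S _ hS
      have ha : aCount S ≠ 0 := fun h => hS (DminAux.eq_trueFun_of_aCount_eq_zero h)
      obtain ⟨m, hm⟩ : ∃ m, aCount S = m + 1 := ⟨aCount S - 1, by omega⟩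
      have hlt : k S ≤ K + m := DminAux.chain_adequate k hk hadq m S hm
      have hpos : 0 < 2 * (aCount S + K - k S) := by omega
      simp [Polynomial.eval_mul, Polynomial.eval_pow, zero_pow (by omega : 2 * (aCount S + K - k S) ≠ 0)]
    rw [Finset.sum_eq_single_of_mem (fun _ => true) (Finset.mem_univ _) hsum]
    have haB : aCount (fun _ : Fin n => true) = 0 := DminAux.aCount_true
    rw [haB, hK]
    simp only [Nat.zero_add, Nat.sub_self, Nat.mul_zero, pow_zero, one_mul,
      Polynomial.eval_mul, Polynomial.eval_pow, Polynomial.eval_C, Polynomial.eval_sub,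
      Polynomial.eval_neg, Polynomial.eval_one, Polynomial.eval_X]
    have he : (-1 - (0 : Polynomial ℤ) ^ 4) = -1 := by norm_num
    rw [he]
    exact mul_ne_zero (pow_ne_zero _ (by norm_num)) (pow_ne_zero _ Polynomial.X_ne_zero)
end
end

section
/- Fix n ∈ ℕ and functions k, r : (Fin n → Bool) → ℕ. Assume that |k(S) − k(S')| ≤ 1 for every pair of adjacent states S, S'. Then every exponent d of A occurring in ⟨n,k,r⟩ with nonzero coefficient satisfies −n − 2·k(S_B) ≤ d ≤ n + 2·k(S_A); in particular, if ⟨n,k,r⟩ ≠ 0 then span(⟨n,k,r⟩) := d_max(⟨n,k,r⟩) − d_min(⟨n,k,r⟩) ≤ 2n + 2·k(S_A) + 2·k(S_B). If moreover k(S) ≤ k(S_A) for every state S with exactly one true coordinate and k(S) ≤ k(S_B) for every state S with exactly one false coordinate (adequacy of the diagram), then ⟨n,k,r⟩ ≠ 0 and span(⟨n,k,r⟩) = 2n + 2·k(S_A) + 2·k(S_B). -/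
open Finset

noncomputable section

open LaurentPolynomial in
lemma term_single (m : ℤ) (K R : ℕ) :
    (T m * (-(T (-2)) - T 2) ^ K * zz ^ R : LP)
    = ∑ j ∈ Finset.range (K+1),
        AddMonoidAlgebra.single (m + 2*K - 4*j)
          ((-1:Polynomial ℤ)^K * (K.choose j : Polynomial ℤ) * Polynomial.X ^ R) := by
  have h1 : (-(T (-2)) - T 2 : LP) = -(T (-2) + T 2) := by ring
  rw [h1, neg_pow (LaurentPolynomial.T (-2) + LaurentPolynomial.T 2 : LP) K, add_pow,
    Finset.mul_sum, Finset.mul_sum, Finset.sum_mul]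
  refine Finset.sum_congr rfl fun j hj => ?_
  have hjK : j ≤ K := Nat.lt_succ_iff.mp (Finset.mem_range.mp hj)
  rw [T_pow, T_pow, LaurentPolynomial.single_eq_C_mul_T]
  have hz : (zz ^ R : LP) = C (Polynomial.X ^ R) := by rw [zz, ← map_pow]
  have hneg : ((-1 : LP)) = C (-1 : Polynomial ℤ) := by simp
  have hcn : ((K.choose j : LP)) = C ((K.choose j : Polynomial ℤ)) := by
    simp [map_natCast]
  rw [hz, hneg, hcn, ← map_pow]
  have hre : ((j : ℤ) * -2 + ((K - j : ℕ) : ℤ) * 2) = 2*K - 4*j := by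
    have : ((K - j : ℕ) : ℤ) = (K : ℤ) - j := by exact_mod_cast Int.ofNat_sub hjK
    rw [this]; ring
  rw [show (m + 2*(K:ℤ) - 4*j) = m + (2*(K:ℤ) - 4*j) by ring, T_add]
  rw [map_mul, map_mul]
  rw [← hre, ← T_add]
  ring

lemma bracket_apply (n : ℕ) (k r : (Fin n → Bool) → ℕ) (d : ℤ) :
    (bracket n k r).coeff d = ∑ S : Fin n → Bool, ∑ j ∈ Finset.range (k S + 1),
      if ((aCount S : ℤ) - bCount S + 2 * k S - 4 * j) = d
      then (-1:Polynomial ℤ)^(k S) * ((k S).choose j : Polynomial ℤ) * Polynomial.X ^ (r S)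
      else 0 := by
  rw [bracket, AddMonoidAlgebra.coeff_sum, Finset.sum_apply']
  refine Finset.sum_congr rfl fun S _ => ?_
  rw [term_single, AddMonoidAlgebra.coeff_sum, Finset.sum_apply']
  refine Finset.sum_congr rfl fun j _ => ?_
  rw [AddMonoidAlgebra.coeff_single, Finsupp.single_apply]

lemma count_eq_zero {n : ℕ} {S : Fin n → Bool} {v : Bool}
    (h : (Finset.univ.filter fun i => S i = v).card = 0) : S = fun _ => !v := by
  funext i
  by_contra hi
  have hv : S i = v := by cases hS : S i <;> cases v <;> simp_all
  have : i ∈ Finset.univ.filter fun i => S i = v := by simp [hv]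
  rw [Finset.card_eq_zero.mp h] at this
  exact absurd this (Finset.notMem_empty i)

lemma flip_bound {n : ℕ} (k : (Fin n → Bool) → ℕ)
    (hk : ∀ S S' : Fin n → Bool, Adjacent S S' → |(k S : ℤ) - (k S' : ℤ)| ≤ 1)
    (v : Bool) (c : ℤ) (t₀ : ℕ)
    (base : ∀ S : Fin n → Bool, (Finset.univ.filter fun i => S i = v).card = t₀ → (k S : ℤ) ≤ c) :
    ∀ t : ℕ, ∀ S : Fin n → Bool, (Finset.univ.filter fun i => S i = v).card = t₀ + t →
      (k S : ℤ) ≤ c + t := by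
  intro t
  induction t with
  | zero => intro S h; simpa using base S (by simpa using h)
  | succ t ih =>
    intro S h
    have hpos : 0 < (Finset.univ.filter fun i => S i = v).card := by omega
    obtain ⟨i, hi⟩ := Finset.card_pos.mp hpos
    have hSi : S i = v := (Finset.mem_filter.mp hi).2
    have hadj : Adjacent S (Function.update S i (!v)) := ⟨i, by rw [hSi]⟩
    have hcard : (Finset.univ.filter fun j => Function.update S i (!v) j = v).card = t₀ + t := by
      have hset : (Finset.univ.filter fun j => Function.update S i (!v) j = v)
          = (Finset.univ.filter fun j => S j = v).erase i := by
        ext j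
        by_cases hj : j = i
        · subst hj; simp [Function.update_self]
        · simp [Function.update_of_ne hj, hj]
      rw [hset, Finset.card_erase_of_mem hi, h]
      omega
    have h1 := abs_le.mp (hk S (Function.update S i (!v)) hadj)
    have h2 := ih _ hcard
    push_cast
    omega

lemma count_add {n : ℕ} (S : Fin n → Bool) : aCount S + bCount S = n := by
  rw [aCount, bCount]
  have h : (Finset.univ.filter fun i => S i = true)
      = Finset.univ.filter fun i => ¬ (S i = false) := by simp
  rw [h, Finset.card_filter_add_card_filter_not, Finset.card_univ, Fintype.card_fin]

/-- Corollary 3.7: if `|k(S) - k(S')| ≤ 1` for adjacent states, then every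
exponent of `A` in `⟨n,k,r⟩` lies in `[-n - 2k(S_B), n + 2k(S_A)]`; in particular if
`⟨n,k,r⟩ ≠ 0` then `span(⟨n,k,r⟩) ≤ 2n + 2k(S_A) + 2k(S_B)`, with equality (and
`⟨n,k,r⟩ ≠ 0`) if the diagram is adequate. -/
theorem span_bracket (n : ℕ) (k r : (Fin n → Bool) → ℕ)
    (hk : ∀ S S' : Fin n → Bool, Adjacent S S' → |(k S : ℤ) - (k S' : ℤ)| ≤ 1) :
    (∀ d ∈ (bracket n k r).coeff.support,
      -(n : ℤ) - 2 * k (fun _ => true) ≤ d ∧ d ≤ (n : ℤ) + 2 * k (fun _ => false)) ∧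
    (∀ h0 : bracket n k r ≠ 0,
      (bracket n k r).coeff.support.max' (Finsupp.support_nonempty_iff.mpr (mt AddMonoidAlgebra.coeff_eq_zero.mp h0)) -
        (bracket n k r).coeff.support.min' (Finsupp.support_nonempty_iff.mpr (mt AddMonoidAlgebra.coeff_eq_zero.mp h0)) ≤
        2 * (n : ℤ) + 2 * k (fun _ => false) + 2 * k (fun _ => true)) ∧
    ((∀ S : Fin n → Bool, bCount S = 1 → k S ≤ k (fun _ => false)) →
      (∀ S : Fin n → Bool, aCount S = 1 → k S ≤ k (fun _ => true)) →
      ∃ h0 : bracket n k r ≠ 0,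
        (bracket n k r).coeff.support.max' (Finsupp.support_nonempty_iff.mpr (mt AddMonoidAlgebra.coeff_eq_zero.mp h0)) -
          (bracket n k r).coeff.support.min' (Finsupp.support_nonempty_iff.mpr (mt AddMonoidAlgebra.coeff_eq_zero.mp h0)) =
          2 * (n : ℤ) + 2 * k (fun _ => false) + 2 * k (fun _ => true)) := by
  have hub : ∀ S : Fin n → Bool, (k S : ℤ) ≤ k (fun _ => false) + bCount S := by
    intro S
    have hbase : ∀ S : Fin n → Bool, (Finset.univ.filter fun i => S i = true).card = 0 →
        (k S : ℤ) ≤ (k (fun _ => false) : ℤ) := by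
      intro S h
      rw [count_eq_zero h]
      exact le_rfl
    have := flip_bound k hk true (k (fun _ => false)) 0 hbase (bCount S) S (by simp [bCount])
    omega
  have hlb : ∀ S : Fin n → Bool, (k S : ℤ) ≤ k (fun _ => true) + aCount S := by
    intro S
    have hbase : ∀ S : Fin n → Bool, (Finset.univ.filter fun i => S i = false).card = 0 →
        (k S : ℤ) ≤ (k (fun _ => true) : ℤ) := by
      intro S h
      rw [count_eq_zero h]
      exact le_rfl
    have := flip_bound k hk false (k (fun _ => true)) 0 hbase (aCount S) S (by simp [aCount])
    omega
  have part1 : ∀ d ∈ (bracket n k r).coeff.support,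
      -(n : ℤ) - 2 * k (fun _ => true) ≤ d ∧ d ≤ (n : ℤ) + 2 * k (fun _ => false) := by
    intro d hd
    rw [Finsupp.mem_support_iff] at hd
    constructor
    · by_contra hlt
      push_neg at hlt
      apply hd
      rw [bracket_apply]
      refine Finset.sum_eq_zero fun S _ => Finset.sum_eq_zero fun j hj => ?_
      rw [if_neg]
      intro he
      have h1 := hlb S
      have h2 := count_add S
      have hjk : j ≤ k S := Nat.lt_succ_iff.mp (Finset.mem_range.mp hj)
      omega
    · by_contra hlt
      push_neg at hlt
      apply hd
      rw [bracket_apply]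
      refine Finset.sum_eq_zero fun S _ => Finset.sum_eq_zero fun j hj => ?_
      rw [if_neg]
      intro he
      have h1 := hub S
      have h2 := count_add S
      omega
  refine ⟨part1, ?_, ?_⟩
  · intro h0
    have hne := Finsupp.support_nonempty_iff.mpr (mt AddMonoidAlgebra.coeff_eq_zero.mp h0)
    have h1 := part1 _ ((bracket n k r).coeff.support.max'_mem hne)
    have h2 := part1 _ ((bracket n k r).coeff.support.min'_mem hne)
    omega
  · intro hA hB
    have hAcount : aCount (fun _ : Fin n => false) = n := by
      have := count_add (fun _ : Fin n => false)
      have hb : bCount (fun _ : Fin n => false) = 0 := by simp [bCount]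
      omega
    have hbSA : bCount (fun _ : Fin n => false) = 0 := by simp [bCount]
    have haSB : aCount (fun _ : Fin n => true) = 0 := by simp [aCount]
    have hbSB : bCount (fun _ : Fin n => true) = n := by
      have := count_add (fun _ : Fin n => true); omega
    -- strengthened bounds
    have hub' : ∀ S : Fin n → Bool, S ≠ (fun _ => false) →
        (k S : ℤ) + 1 ≤ k (fun _ => false) + bCount S := by
      intro S hS
      have hpos : 1 ≤ bCount S := by
        rcases Nat.eq_zero_or_pos (bCount S) with h | h
        · exact absurd (count_eq_zero h) hS
        · exact h
      obtain ⟨t, ht⟩ : ∃ t, bCount S = 1 + t := ⟨bCount S - 1, by omega⟩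
      have hbase : ∀ S : Fin n → Bool, (Finset.univ.filter fun i => S i = true).card = 1 →
          (k S : ℤ) ≤ (k (fun _ => false) : ℤ) := by
        intro S h
        exact_mod_cast hA S h
      have := flip_bound k hk true (k (fun _ => false)) 1 hbase t S (by simpa [bCount] using ht)
      omega
    have hlb' : ∀ S : Fin n → Bool, S ≠ (fun _ => true) →
        (k S : ℤ) + 1 ≤ k (fun _ => true) + aCount S := by
      intro S hS
      have hpos : 1 ≤ aCount S := by
        rcases Nat.eq_zero_or_pos (aCount S) with h | h
        · exact absurd (count_eq_zero h) hS
        · exact h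
      obtain ⟨t, ht⟩ : ∃ t, aCount S = 1 + t := ⟨aCount S - 1, by omega⟩
      have hbase : ∀ S : Fin n → Bool, (Finset.univ.filter fun i => S i = false).card = 1 →
          (k S : ℤ) ≤ (k (fun _ => true) : ℤ) := by
        intro S h
        exact_mod_cast hB S h
      have := flip_bound k hk false (k (fun _ => true)) 1 hbase t S (by simpa [aCount] using ht)
      omega
    -- top coefficient
    have htop : (bracket n k r).coeff ((n : ℤ) + 2 * k (fun _ => false))
        = (-1:Polynomial ℤ)^(k (fun _ : Fin n => false)) *
            Polynomial.X ^ (r (fun _ => false)) := by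
      rw [bracket_apply]
      rw [Finset.sum_eq_single (fun _ : Fin n => false)]
      · rw [Finset.sum_eq_single 0]
        · rw [if_pos (by rw [hAcount, hbSA]; push_cast; ring)]
          simp
        · intro j hj hj0
          rw [if_neg]
          rw [hAcount, hbSA]
          intro he
          omega
        · intro h
          exact absurd (Finset.mem_range.mpr (Nat.succ_pos _)) h
      · intro S _ hS
        refine Finset.sum_eq_zero fun j hj => ?_
        rw [if_neg]
        intro he
        have h1 := hub' S hS
        have h2 := count_add S
        omega
      · intro h
        exact absurd (Finset.mem_univ _) h
    -- bottom coefficient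
    have hbot : (bracket n k r).coeff (-(n : ℤ) - 2 * k (fun _ => true))
        = (-1:Polynomial ℤ)^(k (fun _ : Fin n => true)) *
            Polynomial.X ^ (r (fun _ => true)) := by
      rw [bracket_apply]
      rw [Finset.sum_eq_single (fun _ : Fin n => true)]
      · rw [Finset.sum_eq_single (k (fun _ : Fin n => true))]
        · rw [if_pos (by rw [haSB, hbSB]; push_cast; ring)]
          simp
        · intro j hj hjne
          rw [if_neg]
          rw [haSB, hbSB]
          intro he
          omega
        · intro h
          exact absurd (Finset.mem_range.mpr (Nat.lt_succ_self _)) h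
      · intro S _ hS
        refine Finset.sum_eq_zero fun j hj => ?_
        rw [if_neg]
        intro he
        have h1 := hlb' S hS
        have h2 := count_add S
        have hjk : j ≤ k S := Nat.lt_succ_iff.mp (Finset.mem_range.mp hj)
        omega
      · intro h
        exact absurd (Finset.mem_univ _) h
    have hXne : ∀ K R : ℕ, ((-1:Polynomial ℤ)^K * Polynomial.X ^ R) ≠ 0 := by
      intro K R
      exact mul_ne_zero (pow_ne_zero _ (by norm_num)) (pow_ne_zero _ Polynomial.X_ne_zero)
    have hmemtop : ((n : ℤ) + 2 * k (fun _ => false)) ∈ (bracket n k r).coeff.support :=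
      Finsupp.mem_support_iff.mpr (by rw [htop]; exact hXne _ _)
    have hmembot : (-(n : ℤ) - 2 * k (fun _ => true)) ∈ (bracket n k r).coeff.support :=
      Finsupp.mem_support_iff.mpr (by rw [hbot]; exact hXne _ _)
    have h0 : bracket n k r ≠ 0 :=
      fun h => Finsupp.support_nonempty_iff.mp ⟨_, hmemtop⟩ (AddMonoidAlgebra.coeff_eq_zero.mpr h)
    refine ⟨h0, ?_⟩
    have hne := Finsupp.support_nonempty_iff.mpr (mt AddMonoidAlgebra.coeff_eq_zero.mp h0)
    have hmax : (bracket n k r).coeff.support.max' hne = (n : ℤ) + 2 * k (fun _ => false) :=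
      le_antisymm ((part1 _ ((bracket n k r).coeff.support.max'_mem hne)).2)
        (Finset.le_max' _ _ hmemtop)
    have hmin : (bracket n k r).coeff.support.min' hne = -(n : ℤ) - 2 * k (fun _ => true) :=
      le_antisymm (Finset.min'_le _ _ hmembot)
        ((part1 _ ((bracket n k r).coeff.support.min'_mem hne)).1)
    rw [hmax, hmin]
    ring
end
end

section
/- Fix n ∈ ℕ and arbitrary functions k, r : (Fin n → Bool) → ℕ. Then every exponent d of A occurring with nonzero coefficient in ⟨n,k,r⟩ satisfies d ≡ n (mod 2). Consequently, for every integer w with w ≡ n (mod 2), every exponent of A occurring with nonzero coefficient in (−A)^{−3w}·⟨n,k,r⟩ is even; that is, (−A)^{−3w}·⟨n,k,r⟩ lies in the subring ℤ[A^2, A^{−2}, z] of (ℤ[z])[A,A^{−1}]. -/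
open Finset

noncomputable section

/-- The variable `A = T 1` as a unit of `(ℤ[z])[A,A⁻¹]`. -/
def uA : LPˣ := (LaurentPolynomial.isUnit_T (R := Polynomial ℤ) 1).unit

namespace BracketAux

open LaurentPolynomial

lemma aCount_add_bCount {n : ℕ} (S : Fin n → Bool) : aCount S + bCount S = n := by
  classical
  have h := Finset.card_filter_add_card_filter_not
    (s := (univ : Finset (Fin n))) (p := fun i => S i = false)
  have h2 : (univ.filter fun i => ¬ (S i = false)) = univ.filter fun i => S i = true := by
    apply Finset.filter_congr
    intro i _
    simp
  unfold aCount bCount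
  rw [← h2]
  simpa using h

/-- The units `T m` as a monoid hom from `Multiplicative ℤ`. -/
def Thom : Multiplicative ℤ →* LPˣ where
  toFun m := ⟨T m.toAdd, T (-m.toAdd), by rw [← T_add]; simp, by rw [← T_add]; simp⟩
  map_one' := Units.ext (show (T (Multiplicative.toAdd (1 : Multiplicative ℤ)) : LP) = 1 by
    rw [toAdd_one, T_zero])
  map_mul' x y := Units.ext (show (T ((x * y).toAdd) : LP) = T x.toAdd * T y.toAdd by
    rw [toAdd_mul, T_add])

lemma uA_eq : uA = Thom (Multiplicative.ofAdd 1) :=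
  Units.ext (by simp [uA, Thom, IsUnit.unit_spec])

lemma uA_zpow_val (m : ℤ) : ((uA ^ m : LPˣ) : LP) = T m := by
  rw [uA_eq, ← map_zpow]
  have h : (Multiplicative.ofAdd (1 : ℤ)) ^ m = Multiplicative.ofAdd m := by
    rw [← ofAdd_zsmul]
    simp
  rw [h]
  rfl

/-- The subring of Laurent polynomials supported in even degrees. -/
def evenSub : Subring LP where
  carrier := {f | ∀ d ∈ f.coeff.support, Even d}
  zero_mem' := by simp
  one_mem' := by
    intro d hd
    have h1 : (1 : LP).coeff = Finsupp.single (0 : ℤ) (1 : Polynomial ℤ) := rfl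
    rw [h1] at hd
    have := Finsupp.support_single_subset hd
    simp only [Finset.mem_singleton] at this
    simp [this]
  add_mem' := by
    intro a b ha hb d hd
    rw [AddMonoidAlgebra.coeff_add] at hd
    rcases Finset.mem_union.mp (Finsupp.support_add hd) with h | h
    · exact ha d h
    · exact hb d h
  neg_mem' := by
    intro a ha d hd
    rw [AddMonoidAlgebra.coeff_neg, Finsupp.support_neg] at hd
    exact ha d hd
  mul_mem' := by
    intro a b ha hb d hd
    have := AddMonoidAlgebra.support_coeff_mul_subset a b hd
    rw [Finset.mem_add] at this
    obtain ⟨x, hx, y, hy, hxy⟩ := this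
    exact hxy ▸ (ha x hx).add (hb y hy)

lemma T_mem_evenSub {m : ℤ} (hm : Even m) : (T m : LP) ∈ evenSub := by
  intro d hd
  have h1 : (T m : LP).coeff = Finsupp.single m (1 : Polynomial ℤ) := rfl
  rw [h1] at hd
  have := Finsupp.support_single_subset hd
  simp only [Finset.mem_singleton] at this
  exact this ▸ hm

lemma zz_mem_evenSub : (zz : LP) ∈ evenSub := by
  intro d hd
  have h1 : (zz : LP).coeff = Finsupp.single (0 : ℤ) Polynomial.X := by
    unfold zz
    rw [← AddMonoidAlgebra.coeff_single, single_eq_C_mul_T, T_zero, mul_one]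
  rw [h1] at hd
  have := Finsupp.support_single_subset hd
  simp only [Finset.mem_singleton] at this
  simp [this]

lemma closure_le_evenSub :
    Subring.closure {(T 2 : LP), T (-2), zz} ≤ evenSub := by
  rw [Subring.closure_le]
  intro x hx
  simp only [Set.mem_insert_iff, Set.mem_singleton_iff] at hx
  rcases hx with rfl | rfl | rfl
  · exact T_mem_evenSub ⟨1, by norm_num⟩
  · exact T_mem_evenSub ⟨-1, by norm_num⟩
  · exact zz_mem_evenSub

lemma T_even_mem_closure {m : ℤ} (hm : Even m) :
    (T m : LP) ∈ Subring.closure {(T 2 : LP), T (-2), zz} := by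
  obtain ⟨c, hc⟩ := hm
  rcases le_or_gt 0 c with hc0 | hc0
  · have h : (T m : LP) = (T 2) ^ c.toNat := by
      rw [T_pow]
      congr 1
      omega
    rw [h]
    exact pow_mem (Subring.subset_closure (by simp)) _
  · have h : (T m : LP) = (T (-2)) ^ (-c).toNat := by
      rw [T_pow]
      congr 1
      omega
    rw [h]
    exact pow_mem (Subring.subset_closure (by simp)) _

lemma tail_mem_closure (k' r' : ℕ) :
    (-(T (-2)) - T 2 : LP) ^ k' * zz ^ r' ∈
      Subring.closure {(T 2 : LP), T (-2), zz} := by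
  refine mul_mem (pow_mem ?_ _) (pow_mem (Subring.subset_closure (by simp)) _)
  exact sub_mem (neg_mem (Subring.subset_closure (by simp)))
    (Subring.subset_closure (by simp))

/-- The key computation: `T m * ⟨n,k,r⟩` lies in the closure whenever `m ≡ n (mod 2)`. -/
lemma T_mul_bracket_mem_closure (n : ℕ) (k r : (Fin n → Bool) → ℕ) (m : ℤ)
    (hm : (2 : ℤ) ∣ m + n) :
    (T m : LP) * bracket n k r ∈ Subring.closure {(T 2 : LP), T (-2), zz} := by
  rw [bracket, Finset.mul_sum]
  refine sum_mem fun S _ => ?_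
  have hmul : (T m : LP) *
      (T ((aCount S : ℤ) - (bCount S : ℤ)) *
        (-(T (-2)) - T 2) ^ (k S) * zz ^ (r S))
      = T (m + ((aCount S : ℤ) - (bCount S : ℤ))) *
          ((-(T (-2)) - T 2) ^ (k S) * zz ^ (r S)) := by
    rw [T_add]; ring
  rw [hmul]
  have habn : (aCount S : ℤ) + (bCount S : ℤ) = (n : ℤ) := by
    exact_mod_cast aCount_add_bCount S
  obtain ⟨c, hc⟩ := hm
  have heven : Even (m + ((aCount S : ℤ) - (bCount S : ℤ))) :=
    ⟨c - (bCount S : ℤ), by omega⟩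
  exact mul_mem (T_even_mem_closure heven) (tail_mem_closure (k S) (r S))

lemma shifted_mem_closure (n : ℕ) (k r : (Fin n → Bool) → ℕ) (w : ℤ)
    (hw : w ≡ (n : ℤ) [ZMOD 2]) :
    (((-uA) ^ (-3 * w) : LPˣ) : LP) * bracket n k r ∈
      Subring.closure {(T 2 : LP), T (-2), zz} := by
  have hdvd : (2 : ℤ) ∣ (n : ℤ) - w := Int.ModEq.dvd hw
  have hpar : (2 : ℤ) ∣ (-3 * w) + (n : ℤ) := by
    obtain ⟨c, hc⟩ := hdvd
    exact ⟨-w + c, by omega⟩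
  have hcore := T_mul_bracket_mem_closure n k r (-3 * w) hpar
  rcases Int.even_or_odd (-3 * w) with he | ho
  · rw [he.neg_zpow uA, uA_zpow_val]
    exact hcore
  · have hkey : ((-uA) ^ (-3 * w) : LPˣ) = -(uA ^ (-3 * w)) := by
      obtain ⟨c, hc⟩ := ho
      have heven : Even (2 * c) := ⟨c, two_mul c⟩
      rw [hc, zpow_add, zpow_one, heven.neg_zpow uA]
      calc uA ^ (2 * c) * -uA = -(uA ^ (2 * c) * uA) := by ext; push_cast; ring_nf
        _ = -(uA ^ (2 * c + 1)) := by rw [← zpow_add_one]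
    rw [hkey, Units.val_neg, uA_zpow_val, neg_mul]
    exact neg_mem hcore

lemma support_T_mul_even {m : ℤ} {g : LP} (hg : g ∈ evenSub) {d : ℤ}
    (hd : d ∈ ((T m : LP) * g).coeff.support) : ∃ e : ℤ, Even e ∧ d = m + e := by
  have h := AddMonoidAlgebra.support_coeff_mul_subset (T m : LP) g hd
  rw [Finset.mem_add] at h
  obtain ⟨x, hx, y, hy, hxy⟩ := h
  have hx' : x = m := by
    have h1 : (T m : LP).coeff = Finsupp.single m (1 : Polynomial ℤ) := rfl
    rw [h1] at hx
    simpa using Finsupp.support_single_subset hx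
  exact ⟨y, hg y hy, by omega⟩

lemma bracket_eq (n : ℕ) (k r : (Fin n → Bool) → ℕ) :
    bracket n k r = (T (n : ℤ) : LP) *
      ∑ S : Fin n → Bool,
        T (((aCount S : ℤ) - (bCount S : ℤ)) - (n : ℤ)) *
          ((-(T (-2)) - T 2) ^ (k S) * zz ^ (r S)) := by
  rw [bracket, Finset.mul_sum]
  refine Finset.sum_congr rfl fun S _ => ?_
  rw [← mul_assoc, ← T_add,
    show (n : ℤ) + (((aCount S : ℤ) - (bCount S : ℤ)) - (n : ℤ))
      = (aCount S : ℤ) - (bCount S : ℤ) by ring, mul_assoc]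

lemma inner_mem_evenSub (n : ℕ) (k r : (Fin n → Bool) → ℕ) :
    (∑ S : Fin n → Bool,
        T (((aCount S : ℤ) - (bCount S : ℤ)) - (n : ℤ)) *
          ((-(T (-2)) - T 2) ^ (k S) * zz ^ (r S)) : LP) ∈ evenSub := by
  refine sum_mem fun S _ => ?_
  have habn : (aCount S : ℤ) + (bCount S : ℤ) = (n : ℤ) := by
    exact_mod_cast aCount_add_bCount S
  refine mul_mem (T_mem_evenSub ⟨-(bCount S : ℤ), by omega⟩) ?_
  exact mul_mem (pow_mem (sub_mem (neg_mem (T_mem_evenSub ⟨-1, by norm_num⟩))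
    (T_mem_evenSub ⟨1, by norm_num⟩)) _) (pow_mem zz_mem_evenSub _)

theorem main (n : ℕ) (k r : (Fin n → Bool) → ℕ) :
    (∀ d ∈ (bracket n k r).coeff.support, d ≡ (n : ℤ) [ZMOD 2]) ∧
    (∀ w : ℤ, w ≡ (n : ℤ) [ZMOD 2] →
      (∀ d ∈ ((((-uA) ^ (-3 * w) : LPˣ) : LP) * bracket n k r).coeff.support, Even d) ∧
      (((-uA) ^ (-3 * w) : LPˣ) : LP) * bracket n k r ∈
        Subring.closure {(LaurentPolynomial.T 2 : LP), LaurentPolynomial.T (-2), zz}) := by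
  constructor
  · intro d hd
    rw [bracket_eq] at hd
    obtain ⟨e, he, rfl⟩ := support_T_mul_even (inner_mem_evenSub n k r) hd
    obtain ⟨c, hc⟩ := he
    rw [Int.ModEq]
    omega
  · intro w hw
    have hmem := shifted_mem_closure n k r w hw
    exact ⟨fun d hd => closure_le_evenSub hmem d hd, hmem⟩

end BracketAux

/-- Lemma 4.2: every exponent of `A` in `⟨n,k,r⟩` is congruent to `n`
mod `2`; consequently, for any integer `w ≡ n (mod 2)` all exponents of `A` in
`(-A)^(-3w)·⟨n,k,r⟩` are even, i.e. `(-A)^(-3w)·⟨n,k,r⟩` lies in `ℤ[A², A⁻², z]`. -/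
theorem bracket_exponent_parity (n : ℕ) (k r : (Fin n → Bool) → ℕ) :
    (∀ d ∈ (bracket n k r).coeff.support, d ≡ (n : ℤ) [ZMOD 2]) ∧
    (∀ w : ℤ, w ≡ (n : ℤ) [ZMOD 2] →
      (∀ d ∈ ((((-uA) ^ (-3 * w) : LPˣ) : LP) * bracket n k r).coeff.support, Even d) ∧
      (((-uA) ^ (-3 * w) : LPˣ) : LP) * bracket n k r ∈
        Subring.closure {(LaurentPolynomial.T 2 : LP), LaurentPolynomial.T (-2), zz}) := by
  exact BracketAux.main n k r
end
end

section
/- Fix n ∈ ℕ and a function f : (Fin n → Bool) → ℤ such that |f(S) − f(S')| = 1 for every pair of adjacent states S, S'. Then for any two states S and S', b(S) − a(S) + 2·f(S) ≡ b(S') − a(S') + 2·f(S') (mod 4). -/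
open Finset

noncomputable def gSum {n : ℕ} (S : Fin n → Bool) : ℤ :=
  ∑ i : Fin n, (if S i then (1 : ℤ) else -1)

lemma gSum_eq {n : ℕ} (S : Fin n → Bool) :
    gSum S = (bCount S : ℤ) - (aCount S : ℤ) := by
  classical
  rw [gSum, Finset.sum_ite, Finset.sum_const, Finset.sum_const]
  simp [bCount, aCount]
  ring

lemma gSum_update {n : ℕ} (S : Fin n → Bool) (i : Fin n) :
    gSum (Function.update S i (!(S i))) =
      gSum S + (if S i then (-2 : ℤ) else 2) := by
  classical
  unfold gSum
  rw [← Finset.sum_erase_add _ _ (Finset.mem_univ i),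
      ← Finset.sum_erase_add _ (fun j => if S j then (1:ℤ) else -1) (Finset.mem_univ i)]
  have h1 : ∀ j ∈ Finset.univ.erase i,
      (if Function.update S i (!(S i)) j then (1:ℤ) else -1) = (if S j then 1 else -1) := by
    intro j hj
    rw [Function.update_of_ne (Finset.ne_of_mem_erase hj)]
  rw [Finset.sum_congr rfl h1, Function.update_self]
  cases h : S i <;> simp [h] <;> ring

lemma adj_step {n : ℕ} (f : (Fin n → Bool) → ℤ)
    (hf : ∀ S S' : Fin n → Bool, Adjacent S S' → |f S - f S'| = 1)
    (S : Fin n → Bool) (i : Fin n) :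
    ((bCount S : ℤ) - (aCount S : ℤ) + 2 * f S) ≡
      ((bCount (Function.update S i (!(S i))) : ℤ) -
        (aCount (Function.update S i (!(S i))) : ℤ) +
        2 * f (Function.update S i (!(S i)))) [ZMOD 4] := by
  set T := Function.update S i (!(S i)) with hT
  have hadj : Adjacent S T := ⟨i, rfl⟩
  have hdf := hf S T hadj
  have hg : (bCount T : ℤ) - (aCount T : ℤ) =
      ((bCount S : ℤ) - (aCount S : ℤ)) + (if S i then (-2:ℤ) else 2) := by
    rw [← gSum_eq, ← gSum_eq, hT, gSum_update]
  have hd : f S - f T = 1 ∨ f S - f T = -1 := abs_eq (by norm_num) |>.mp hdf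
  rw [Int.modEq_iff_dvd, hg]
  cases h : S i <;> simp [h] <;> omega

/-- Equation (5.2) of the paper: if `f` changes by exactly `±1` under
switching one smoothing, then `b(S) - a(S) + 2·f(S)` is constant modulo `4` over all
states `S`. -/
theorem state_sum_mod_four (n : ℕ) (f : (Fin n → Bool) → ℤ)
    (hf : ∀ S S' : Fin n → Bool, Adjacent S S' → |f S - f S'| = 1) :
    ∀ S S' : Fin n → Bool,
      ((bCount S : ℤ) - (aCount S : ℤ) + 2 * f S) ≡
        ((bCount S' : ℤ) - (aCount S' : ℤ) + 2 * f S') [ZMOD 4] := by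
  classical
  suffices h : ∀ (k : ℕ) (S S' : Fin n → Bool),
      (Finset.univ.filter fun i => S i ≠ S' i).card ≤ k →
      ((bCount S : ℤ) - (aCount S : ℤ) + 2 * f S) ≡
        ((bCount S' : ℤ) - (aCount S' : ℤ) + 2 * f S') [ZMOD 4] by
    intro S S'
    exact h _ S S' le_rfl
  intro k
  induction k with
  | zero =>
    intro S S' hc
    have : S = S' := by
      funext i
      by_contra hi
      have : i ∈ Finset.univ.filter fun i => S i ≠ S' i := by simp [hi]
      have := Finset.card_pos.mpr ⟨i, this⟩
      omega
    rw [this]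
  | succ k ih =>
    intro S S' hc
    by_cases hne : ∃ i, S i ≠ S' i
    · obtain ⟨i, hi⟩ := hne
      set T := Function.update S i (!(S i)) with hT
      have hTi : T i = S' i := by
        rw [hT, Function.update_self]
        cases hS : S i <;> cases hS' : S' i <;> simp_all
      have hTj : ∀ j, j ≠ i → T j = S j := fun j hj => Function.update_of_ne hj _ _
      have hsub : (Finset.univ.filter fun j => T j ≠ S' j) ⊆
          (Finset.univ.filter fun j => S j ≠ S' j).erase i := by
        intro j hj
        simp only [Finset.mem_filter, Finset.mem_univ, true_and] at hj
        have hji : j ≠ i := by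
          intro h; rw [h, hTi] at hj; exact hj rfl
        rw [Finset.mem_erase]
        exact ⟨hji, by simp [← hTj j hji, hj]⟩
      have hcard : (Finset.univ.filter fun j => T j ≠ S' j).card ≤ k := by
        have h1 := Finset.card_le_card hsub
        have h2 : i ∈ Finset.univ.filter fun j => S j ≠ S' j := by simp [hi]
        have := Finset.card_erase_of_mem h2
        omega
      exact (adj_step f hf S i).trans (ih T S' hcard)
    · push_neg at hne
      rw [funext hne]
end

section
/- Fix n ∈ ℕ, functions k, r : (Fin n → Bool) → ℕ, and an integer w. Let ι be the ring automorphism of (ℤ[z])[A,A^{−1}] determined by ι(A) = A^{−1} and ι(z) = z, and for a state S let ¬S denote the state obtained by negating every coordinate of S (so ¬ interchanges A- and B-smoothings). Then ι( (−A)^{−3w} · ⟨n, k, r⟩ ) = (−A)^{−3(−w)} · ⟨n, k∘¬, r∘¬⟩. -/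
open Finset

noncomputable section

/-- The negation of a state, interchanging `A`- and `B`-smoothings. -/
def negState {n : ℕ} (S : Fin n → Bool) : Fin n → Bool := fun i => !(S i)

open LaurentPolynomial

lemma hT_neg (ι : LP ≃+* LP) (hA : ι (T 1) = T (-1)) : ι (T (-1)) = T 1 := by
  have h1 : (T (-1) : LP) * ι (T (-1)) = 1 := by
    have h2 : ι ((T 1 : LP) * T (-1)) = 1 := by
      rw [← T_add]; norm_num [T_zero]
    rwa [map_mul, hA] at h2
  calc ι (T (-1)) = (T 1 * T (-1)) * ι (T (-1)) := by rw [← T_add]; norm_num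
    _ = T 1 * ((T (-1)) * ι (T (-1))) := by ring
    _ = T 1 := by rw [h1, mul_one]

lemma hT (ι : LP ≃+* LP) (hA : ι (T 1) = T (-1)) : ∀ m : ℤ, ι (T m) = T (-m) := by
  have hneg := hT_neg ι hA
  intro m
  induction m using Int.induction_on with
  | zero => simpa using map_one ι
  | succ i ih => rw [show ((i:ℤ)+1) = i + 1 from rfl, T_add, map_mul, ih, hA, ← T_add]; ring_nf
  | pred i ih => rw [show (-(i:ℤ)-1) = -i + (-1) from by ring, T_add, map_mul, ih, hneg, ← T_add]; ring_nf

lemma uA_inv_val : ((uA⁻¹ : LPˣ) : LP) = T (-1) := by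
  have h1 : ((uA⁻¹ : LPˣ) : LP) * T 1 = 1 := by
    have := Units.inv_mul uA
    rwa [show ((uA : LPˣ) : LP) = T 1 from (LaurentPolynomial.isUnit_T 1).unit_spec] at this
  calc ((uA⁻¹ : LPˣ) : LP) = (((uA⁻¹ : LPˣ) : LP) * T 1) * T (-1) := by
        rw [mul_assoc, ← T_add]; norm_num
    _ = T (-1) := by rw [h1, one_mul]

lemma aCount_neg {n : ℕ} (S : Fin n → Bool) : aCount (negState S) = bCount S := by
  unfold aCount bCount negState; congr 1; ext i; simp

lemma bCount_neg {n : ℕ} (S : Fin n → Bool) : bCount (negState S) = aCount S := by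
  unfold aCount bCount negState; congr 1; ext i; simp

lemma bracket_iota (n : ℕ) (k r : (Fin n → Bool) → ℕ) (ι : LP ≃+* LP)
    (hA : ι (T 1) = T (-1)) (hz : ι zz = zz) :
    ι (bracket n k r) = bracket n (k ∘ negState) (r ∘ negState) := by
  have hT := hT ι hA
  unfold bracket
  rw [map_sum]
  have hinv : Function.Bijective (negState (n := n)) := by
    apply Function.Involutive.bijective; intro S; funext i; simp [negState]
  rw [← Fintype.sum_bijective negState hinv _ _ (fun S => ?_)]
  simp only [map_mul, map_pow, map_sub, map_neg, hT, hz, Function.comp]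
  rw [aCount_neg, bCount_neg]
  have hnn : negState (negState S) = S := by funext i; simp [negState]
  rw [neg_sub]
  norm_num
  ring
  simp

/-- Proposition 4.14: for any ring automorphism `ι` of `(ℤ[z])[A,A⁻¹]`
with `ι(A) = A⁻¹` and `ι(z) = z`, we have
`ι((-A)^(-3w) · ⟨n,k,r⟩) = (-A)^(-3(-w)) · ⟨n, k∘¬, r∘¬⟩`. -/
theorem bracket_mirror (n : ℕ) (k r : (Fin n → Bool) → ℕ) (w : ℤ)
    (ι : LP ≃+* LP)
    (hA : ι (LaurentPolynomial.T 1) = LaurentPolynomial.T (-1))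
    (hz : ι zz = zz) :
    ι ((((-uA) ^ (-3 * w) : LPˣ) : LP) * bracket n k r) =
      (((-uA) ^ (-3 * (-w)) : LPˣ) : LP) * bracket n (k ∘ negState) (r ∘ negState) := by
  rw [map_mul, bracket_iota n k r ι hA hz]
  congr 1
  -- ι of unit power
  let ι' : LPˣ ≃* LPˣ := Units.mapEquiv ι.toMulEquiv
  have hval : ∀ v : LPˣ, ((ι' v : LPˣ) : LP) = ι (v : LP) := fun v => rfl
  have key : ι' (-uA) = (-uA)⁻¹ := by
    have hin : (-uA)⁻¹ = -(uA⁻¹) := inv_neg (a := uA)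
    rw [hin]
    apply Units.ext
    have huAval : ((uA : LPˣ) : LP) = T 1 := (LaurentPolynomial.isUnit_T 1).unit_spec
    rw [hval, Units.val_neg, Units.val_neg, map_neg, uA_inv_val, huAval, hA]
  calc ι ((((-uA) ^ (-3 * w) : LPˣ) : LP)) = ((ι' ((-uA) ^ (-3*w)) : LPˣ) : LP) := rfl
    _ = (((ι' (-uA)) ^ (-3*w) : LPˣ) : LP) := by rw [map_zpow]
    _ = ((((-uA)⁻¹) ^ (-3*w) : LPˣ) : LP) := by rw [key]
    _ = (((-uA) ^ (-3 * -w) : LPˣ) : LP) := by rw [inv_zpow']; congr 1; ring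
end
end
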